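/- Let D⋆ be a global minimizer of J̃ over K, set H⋆ = C − (1/2)[[A,D⋆],A], and let D̃ ∈ K satisfy Tr(H⋆ D̃) = Tr(H⋆ D⋆) (i.e. D̃ also minimizes the linear functional D ↦ Tr(H⋆ D) over K). Then D̃ is a global minimizer of J̃ over K if and only if [A, D⋆ − D̃] = 0. -/
import Mathlib


open Matrix Filter Topology

noncomputable section

/-- Commutator of matrices. -/
def commut {M : ℕ} (X Y : Matrix (Fin M) (Fin M) ℝ) : Matrix (Fin M) (Fin M) ℝ :=
  X * Y - Y * X

/-- `K = CH(Gr(m,ℝ^M))`: symmetric `D` with `0 ⪯ D ⪯ I` and `Tr D = m`. -/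
def Kset (M m : ℕ) (D : Matrix (Fin M) (Fin M) ℝ) : Prop :=
  D.PosSemidef ∧ (1 - D).PosSemidef ∧ D.trace = (m : ℝ)

/-- Squared Frobenius norm `‖X‖² = Tr(Xᵀ X)`. -/
def fnormSq {M : ℕ} (X : Matrix (Fin M) (Fin M) ℝ) : ℝ := (Xᵀ * X).trace

/-- The convexified functional `J̃(D) = Tr(CD) + (1/4)‖[A,D]‖²` with `C = B − (1/2)A²`. -/
def Jt {M : ℕ} (A B D : Matrix (Fin M) (Fin M) ℝ) : ℝ :=
  ((B - (1 / 2 : ℝ) • (A * A)) * D).trace + (1 / 4) * fnormSq (commut A D)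

lemma fnormSq_eq {M : ℕ} (X : Matrix (Fin M) (Fin M) ℝ) :
    fnormSq X = ∑ i, ∑ j, (X j i) ^ 2 := by
  unfold fnormSq Matrix.trace
  simp [Matrix.mul_apply, Matrix.diag, sq]

lemma fnormSq_nonneg {M : ℕ} (X : Matrix (Fin M) (Fin M) ℝ) : 0 ≤ fnormSq X := by
  rw [fnormSq_eq]; positivity

lemma fnormSq_zero {M : ℕ} (X : Matrix (Fin M) (Fin M) ℝ) (h : fnormSq X = 0) : X = 0 := by
  rw [fnormSq_eq] at h
  have h1 : ∀ i ∈ Finset.univ, ∀ j ∈ Finset.univ, (X j i)^2 = 0 := by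
    have := (Finset.sum_eq_zero_iff_of_nonneg (fun i _ => by positivity)).mp h
    intro i hi j hj
    exact (Finset.sum_eq_zero_iff_of_nonneg (fun j _ => by positivity)).mp (this i hi) j hj
  ext i j
  simpa using pow_eq_zero_iff (n := 2) (by norm_num) |>.mp (h1 j (by simp) i (by simp))

lemma tr4 {M : ℕ} (a b c d : Matrix (Fin M) (Fin M) ℝ) :
    (a * b * c * d).trace = (d * a * b * c).trace := by
  rw [Matrix.trace_mul_comm (a * b * c) d, ← Matrix.mul_assoc, ← Matrix.mul_assoc]

lemma trace_cross {M : ℕ} (X Y Z : Matrix (Fin M) (Fin M) ℝ) :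
    (commut X Y * commut X Z).trace = (commut (commut X Y) X * Z).trace := by
  simp only [commut, Matrix.sub_mul, Matrix.mul_sub, Matrix.trace_sub, ← Matrix.mul_assoc]
  linear_combination tr4 Y X Z X - tr4 X Y Z X

lemma fnormSq_add {M : ℕ} (P Q : Matrix (Fin M) (Fin M) ℝ) :
    fnormSq (P + Q) = fnormSq P + fnormSq Q + 2 * (Pᵀ * Q).trace := by
  have h : (Qᵀ * P).trace = (Pᵀ * Q).trace := by
    rw [← Matrix.trace_transpose (Qᵀ * P), Matrix.transpose_mul, Matrix.transpose_transpose]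
  simp only [fnormSq, Matrix.transpose_add, Matrix.add_mul, Matrix.mul_add, Matrix.trace_add]
  linarith

lemma key {M : ℕ} (A B Dstar D : Matrix (Fin M) (Fin M) ℝ)
    (hA : Aᵀ = A) (hS : Dstarᵀ = Dstar) (hD : Dᵀ = D) :
    ((B - (1 / 2 : ℝ) • (A * A)) * D).trace + (1 / 4) * fnormSq (commut A D)
      = (((B - (1 / 2 : ℝ) • (A * A)) * Dstar).trace + (1 / 4) * fnormSq (commut A Dstar))
        + (((B - (1 / 2 : ℝ) • (A * A)) - (1 / 2 : ℝ) • commut (commut A Dstar) A)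
            * (D - Dstar)).trace
        + (1 / 4) * fnormSq (commut A (D - Dstar)) := by
  set C := B - (1 / 2 : ℝ) • (A * A) with hC
  set E := D - Dstar with hEdef
  have hE : Eᵀ = E := by simp [hEdef, Matrix.transpose_sub, hS, hD]
  have hcomm : commut A D = commut A Dstar + commut A E := by
    simp only [commut, hEdef, Matrix.mul_sub, Matrix.sub_mul]
    abel
  have htp : (commut A Dstar)ᵀ = -(commut A Dstar) := by
    simp only [commut, Matrix.transpose_sub, Matrix.transpose_mul, hA, hS]
    abel
  have hcross : ((commut A Dstar)ᵀ * commut A E).trace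
      = -((commut (commut A Dstar) A) * E).trace := by
    rw [htp, Matrix.neg_mul, Matrix.trace_neg, trace_cross]
  have hfn : fnormSq (commut A D) = fnormSq (commut A Dstar) + fnormSq (commut A E)
      - 2 * ((commut (commut A Dstar) A) * E).trace := by
    rw [hcomm, fnormSq_add, hcross]; ring
  have hCD : (C * D).trace = (C * Dstar).trace + (C * E).trace := by
    rw [hEdef, Matrix.mul_sub, Matrix.trace_sub]; ring
  have hmid : ((C - (1 / 2 : ℝ) • commut (commut A Dstar) A) * E).trace
      = (C * E).trace - (1 / 2) * ((commut (commut A Dstar) A) * E).trace := by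
    rw [Matrix.sub_mul, Matrix.trace_sub, Matrix.smul_mul, Matrix.trace_smul, smul_eq_mul]
  rw [hfn, hCD, hmid]; ring

lemma psd_symm {M : ℕ} {D : Matrix (Fin M) (Fin M) ℝ} (h : D.PosSemidef) : Dᵀ = D := by
  have := h.isHermitian
  rwa [Matrix.IsHermitian, conjTranspose_eq_transpose_of_trivial] at this

/-- let `D⋆` be a global minimizer of `J̃` over `K`,
`H⋆ = C − (1/2)[[A,D⋆],A]`, and `D̃ ∈ K` with `Tr(H⋆ D̃) = Tr(H⋆ D⋆)`. Then `D̃` is a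
global minimizer of `J̃` over `K` iff `[A, D⋆ − D̃] = 0`. -/
theorem stmt_7 {M m : ℕ} (hM : 2 ≤ M) (hm1 : 1 ≤ m) (hm2 : m ≤ M - 1)
    (A B : Matrix (Fin M) (Fin M) ℝ) (hA : A.IsSymm) (hApsd : A.PosSemidef)
    (hB : B.IsSymm) (Dstar : Matrix (Fin M) (Fin M) ℝ) (hDstar : Kset M m Dstar)
    (hmin : ∀ D : Matrix (Fin M) (Fin M) ℝ, Kset M m D → Jt A B Dstar ≤ Jt A B D)
    (Hstar : Matrix (Fin M) (Fin M) ℝ)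
    (hH : Hstar = (B - (1 / 2 : ℝ) • (A * A)) - (1 / 2 : ℝ) • commut (commut A Dstar) A)
    (Dtil : Matrix (Fin M) (Fin M) ℝ) (hDtil : Kset M m Dtil)
    (htr : (Hstar * Dtil).trace = (Hstar * Dstar).trace) :
    (∀ D : Matrix (Fin M) (Fin M) ℝ, Kset M m D → Jt A B Dtil ≤ Jt A B D) ↔
      commut A (Dstar - Dtil) = 0 := by
  have hAt : Aᵀ = A := hA
  have hSt : Dstarᵀ = Dstar := psd_symm hDstar.1
  have hTt : Dtilᵀ = Dtil := psd_symm hDtil.1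
  have hmidz : (Hstar * (Dtil - Dstar)).trace = 0 := by
    rw [Matrix.mul_sub, Matrix.trace_sub, htr, sub_self]
  have h0 : Jt A B Dtil = Jt A B Dstar + (1 / 4) * fnormSq (commut A (Dtil - Dstar)) := by
    have := key A B Dstar Dtil hAt hSt hTt
    rw [← hH] at this
    unfold Jt
    rw [this, hmidz]; ring
  have hneg : commut A (Dstar - Dtil) = -(commut A (Dtil - Dstar)) := by
    simp only [commut, Matrix.mul_sub, Matrix.sub_mul]
    abel
  constructor
  · intro h
    have hle : Jt A B Dtil ≤ Jt A B Dstar := h Dstar hDstar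
    have hfz : fnormSq (commut A (Dtil - Dstar)) = 0 := by
      have := fnormSq_nonneg (commut A (Dtil - Dstar))
      nlinarith [h0, hle]
    rw [hneg, fnormSq_zero _ hfz, neg_zero]
  · intro hc
    have hz : commut A (Dtil - Dstar) = 0 := by
      have : -(commut A (Dtil - Dstar)) = 0 := by rw [← hneg, hc]
      simpa using this
    have heq : Jt A B Dtil = Jt A B Dstar := by
      rw [h0, hz]
      simp [fnormSq]
    intro D hD
    rw [heq]
    exact hmin D hD
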